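/- Let m ∈ ℕ with m ≥ 2, let p ∈ (0,1), let f_k(x) = (x+k)/2^m for k ∈ {0,…,2^m−1}, and let μ be a Borel probability measure on [0,1] satisfying μ(B) = p · μ(f_{2^m−2}^{-1}(B)) + (1−p) · μ(f_{2^m−1}^{-1}(B)) for every Borel set B ⊆ [0,1], with probability distribution function Φ(x) = μ([0,x]). Define φ(x) = (1/m) · ∑_{i=0}^{m−1} ∑_{k=0}^{2^i−1} [Φ((x+k)/2^i) − Φ(k/2^i)]. Then φ(x) = 0 if and only if x ∈ [0, (2^m − 2^{m−1} − 1)/(2^m − 1)]. -/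

import Mathlib

open MeasureTheory

lemma pre_Icc (c N u v : ℝ) (hN : 0 < N) :
    (fun x : ℝ => (x + c) / N) ⁻¹' Set.Icc u v = Set.Icc (N*u - c) (N*v - c) := by
  ext x
  simp only [Set.mem_preimage, Set.mem_Icc, le_div_iff₀ hN, div_le_iff₀ hN]
  constructor <;> rintro ⟨h1, h2⟩ <;> constructor <;> nlinarith

lemma pre_Ico (c N u v : ℝ) (hN : 0 < N) :
    (fun x : ℝ => (x + c) / N) ⁻¹' Set.Ico u v = Set.Ico (N*u - c) (N*v - c) := by
  ext x
  simp only [Set.mem_preimage, Set.mem_Ico, le_div_iff₀ hN, div_lt_iff₀ hN]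
  constructor <;> rintro ⟨h1, h2⟩ <;> constructor <;> nlinarith

lemma pre_singleton (c N b : ℝ) (hN : 0 < N) :
    (fun x : ℝ => (x + c) / N) ⁻¹' ({b} : Set ℝ) = {N*b - c} := by
  ext x
  simp only [Set.mem_preimage, Set.mem_singleton_iff, div_eq_iff hN.ne']
  constructor <;> intro h <;> nlinarith

lemma ennreal_fix {e c : ENNReal} (hc : c < 1) (he : e ≠ ⊤) (h : e = c * e) : e = 0 := by
  by_contra h0
  have h2 : c * e < 1 * e := by rw [mul_comm c, mul_comm 1]; exact ENNReal.mul_lt_mul_right h0 he hc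
  rw [one_mul] at h2
  exact (ne_of_lt h2) h.symm

/-- For `m ≥ 2` and `μ` invariant for the IFS with probability vector
`P = (0,…,0,p,1−p)`, the MW-solution `φ` built from `Φ` vanishes at `x ∈ [0,1]` exactly
when `x ∈ [0, (2^m − 2^{m−1} − 1)/(2^m − 1)]`. -/
theorem stmt_18 (m : ℕ) (hm : 2 ≤ m) (p : ℝ) (hp : p ∈ Set.Ioo (0:ℝ) 1)
    (μ : Measure ℝ) [IsProbabilityMeasure μ] (hμ : μ (Set.Icc (0:ℝ) 1) = 1)
    (hinv : ∀ B ⊆ Set.Icc (0:ℝ) 1, MeasurableSet B →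
      μ B = ENNReal.ofReal p * μ ((fun x : ℝ => (x + (2 ^ m - 2 : ℕ)) / 2 ^ m) ⁻¹' B)
        + ENNReal.ofReal (1 - p) * μ ((fun x : ℝ => (x + (2 ^ m - 1 : ℕ)) / 2 ^ m) ⁻¹' B))
    (Φ : ℝ → ℝ) (hΦ : ∀ x, Φ x = (μ (Set.Icc 0 x)).toReal)
    (φ : ℝ → ℝ)
    (hφ : ∀ x, φ x = (1 / m : ℝ) * ∑ i ∈ Finset.range m, ∑ k ∈ Finset.range (2 ^ i),
      (Φ ((x + k) / 2 ^ i) - Φ (k / 2 ^ i))) :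
    ∀ x ∈ Set.Icc (0:ℝ) 1,
      (φ x = 0 ↔ x ≤ ((2 : ℝ) ^ m - (2 : ℝ) ^ (m - 1) - 1) / ((2 : ℝ) ^ m - 1)) := by
  obtain ⟨hp0, hp1⟩ := hp
  have h2m : (2:ℕ) ≤ 2 ^ m := by
    calc (2:ℕ) = 2 ^ 1 := (pow_one 2).symm
    _ ≤ 2 ^ m := Nat.pow_le_pow_right (by norm_num) (by omega)
  have h1m' : (1:ℕ) ≤ 2 ^ (m - 1) := Nat.one_le_two_pow
  set M : ℝ := (2:ℝ) ^ (m - 1) with hMdef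
  set N : ℝ := (2:ℝ) ^ m with hNdef
  have hNM : N = 2 * M := by
    rw [hNdef, hMdef]
    conv_lhs => rw [show m = m - 1 + 1 by omega]
    rw [pow_succ]; ring
  have hM1 : (1:ℝ) ≤ M := by
    rw [hMdef]; exact one_le_pow₀ one_le_two
  have hN4 : (4:ℝ) ≤ N := by
    calc (4:ℝ) = 2 ^ 2 := by norm_num
    _ ≤ 2 ^ m := pow_le_pow_right₀ one_le_two hm
  have hN0 : (0:ℝ) < N := by linarith
  have hM0 : (0:ℝ) < M := by linarith
  have hcast2 : ((2 ^ m - 2 : ℕ) : ℝ) = N - 2 := by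
    rw [hNdef, Nat.cast_sub h2m]; push_cast; ring
  have hcast1 : ((2 ^ m - 1 : ℕ) : ℝ) = N - 1 := by
    rw [hNdef, Nat.cast_sub (by omega)]; push_cast; ring
  have hcastM : ((2 ^ (m - 1) - 1 : ℕ) : ℝ) = M - 1 := by
    rw [hMdef, Nat.cast_sub h1m']; push_cast; ring
  set a : ℝ := (N - 2) / (N - 1) with hadef
  have haN : a * (N - 1) = N - 2 := div_mul_cancel₀ _ (by linarith)
  have ha0 : 0 < a := div_pos (by linarith) (by linarith)
  have ha1 : a < 1 := by rw [hadef, div_lt_one (by linarith)]; linarith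
  have hfin : ∀ S : Set ℝ, μ S ≠ ⊤ := fun S => measure_ne_top μ S
  have hcompl : μ (Set.Icc (0:ℝ) 1)ᶜ = 0 := by
    have h := measure_compl (measurableSet_Icc : MeasurableSet (Set.Icc (0:ℝ) 1)) (hfin _)
    rw [hμ, measure_univ] at h
    simpa using h
  have hzero : ∀ S : Set ℝ, S ⊆ Set.Iio 0 → μ S = 0 := by
    intro S hS
    refine measure_mono_null (fun y hy => ?_) hcompl
    have hy0 : y < 0 := hS hy
    simp only [Set.mem_compl_iff, Set.mem_Icc, not_and]
    intro h'; linarith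
  have hInv' : ∀ B ⊆ Set.Icc (0:ℝ) 1, MeasurableSet B →
      μ B = ENNReal.ofReal p * μ ((fun x : ℝ => (x + (N - 2)) / N) ⁻¹' B)
        + ENNReal.ofReal (1 - p) * μ ((fun x : ℝ => (x + (N - 1)) / N) ⁻¹' B) := by
    intro B hB hmB
    have h := hinv B hB hmB
    simpa only [hcast2, hcast1] using h
  have hplt1 : ENNReal.ofReal p < 1 := by
    rw [show (1 : ENNReal) = ENNReal.ofReal 1 by simp]
    exact ENNReal.ofReal_lt_ofReal_iff_of_nonneg (le_of_lt hp0) |>.2 hp1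
  have hpne0 : ENNReal.ofReal p ≠ 0 := by
    simp only [ne_eq, ENNReal.ofReal_eq_zero, not_le]; exact hp0
  -- Step 1 : μ [0,a) = 0
  have hIco : μ (Set.Ico 0 a) = 0 := by
    have h := hInv' (Set.Ico 0 a)
      (fun y hy => ⟨hy.1, le_trans (le_of_lt hy.2) (le_of_lt ha1)⟩) measurableSet_Ico
    rw [pre_Ico _ _ _ _ hN0, pre_Ico _ _ _ _ hN0] at h
    have e1 : Set.Ico (N*0 - (N - 2)) (N*a - (N - 2)) = Set.Ico (-(N - 2)) a := by
      rw [show N*0 - (N - 2) = -(N - 2) by ring, show N*a - (N - 2) = a by linarith [haN]]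
    have e2 : μ (Set.Ico (N*0 - (N - 1)) (N*a - (N - 1))) = 0 := by
      apply hzero
      intro y hy
      have h2 : y < N*a - (N - 1) := hy.2
      have h3 : N*a - (N - 1) = a - 1 := by linarith [haN]
      show y < 0
      rw [h3] at h2; linarith
    have e3 : μ (Set.Ico (-(N - 2)) a) = μ (Set.Ico 0 a) := by
      have hsub1 : Set.Ico (-(N - 2)) a ⊆ Set.Ico (-(N - 2)) 0 ∪ Set.Ico 0 a := by
        intro y hy
        rcases lt_or_ge y 0 with h' | h'
        · exact Or.inl ⟨hy.1, h'⟩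
        · exact Or.inr ⟨h', hy.2⟩
      refine le_antisymm ?_ (measure_mono (Set.Ico_subset_Ico_left (by linarith)))
      calc μ (Set.Ico (-(N - 2)) a) ≤ μ (Set.Ico (-(N - 2)) 0 ∪ Set.Ico 0 a) :=
            measure_mono hsub1
        _ ≤ μ (Set.Ico (-(N - 2)) 0) + μ (Set.Ico 0 a) := measure_union_le _ _
        _ = μ (Set.Ico 0 a) := by rw [hzero _ (fun y hy => hy.2), zero_add]
    rw [e1, e3, e2, mul_zero, add_zero] at h
    exact ennreal_fix hplt1 (hfin _) h
  -- Step 2 : μ {a} = 0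
  have hsing : μ ({a} : Set ℝ) = 0 := by
    have h := hInv' {a} (Set.singleton_subset_iff.2 ⟨ha0.le, ha1.le⟩) (measurableSet_singleton a)
    rw [pre_singleton _ _ _ hN0, pre_singleton _ _ _ hN0] at h
    rw [show N*a - (N - 2) = a by linarith [haN]] at h
    have e2 : μ ({N*a - (N - 1)} : Set ℝ) = 0 := by
      apply hzero
      intro y hy
      have : y = N*a - (N - 1) := hy
      show y < 0
      rw [this]; linarith [haN, ha1]
    rw [e2, mul_zero, add_zero] at h
    exact ennreal_fix hplt1 (hfin _) h
  -- Step 3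
  have hIcc0a : μ (Set.Icc 0 a) = 0 := by
    refine measure_mono_null (fun y hy => ?_) (measure_union_null hIco hsing)
    rcases eq_or_lt_of_le hy.2 with h | h
    · exact Or.inr (by simp [h])
    · exact Or.inl ⟨hy.1, h⟩
  have hΦ0 : ∀ y : ℝ, y ≤ a → Φ y = 0 := by
    intro y hy
    rw [hΦ, measure_mono_null (Set.Icc_subset_Icc_right hy) hIcc0a]
    simp
  have hΦmono : ∀ u v : ℝ, u ≤ v → Φ u ≤ Φ v := by
    intro u v h
    rw [hΦ, hΦ]
    exact ENNReal.toReal_mono (hfin _) (measure_mono (Set.Icc_subset_Icc_right h))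
  -- Step 4
  have hIcca1 : μ (Set.Icc a 1) ≠ 0 := by
    intro h0
    have hsub : μ (Set.Icc (0:ℝ) 1) ≤ μ (Set.Ico 0 a) + μ (Set.Icc a 1) := by
      refine le_trans (measure_mono ?_) (measure_union_le _ _)
      intro y hy
      rcases lt_or_ge y a with h' | h'
      · exact Or.inl ⟨hy.1, h'⟩
      · exact Or.inr ⟨h', hy.2⟩
    rw [hμ, hIco, h0] at hsub
    simp at hsub
  have key : ∀ n : ℕ, ∀ c : ℝ, a < c → c ≤ 1 → μ (Set.Icc a c) = 0 →
      a + 2 ^ (m * n) * (c - a) < 1 := by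
    intro n
    induction n with
    | zero =>
      intro c hac hc1 h0
      rcases lt_or_eq_of_le hc1 with h | h
      · simp only [Nat.mul_zero, pow_zero, one_mul]; linarith
      · exact absurd h0 (h ▸ hIcca1)
    | succ n ih =>
      intro c hac hc1 h0
      have h := hInv' (Set.Icc a c)
        (fun y hy => ⟨le_trans ha0.le hy.1, le_trans hy.2 hc1⟩) measurableSet_Icc
      rw [pre_Icc _ _ _ _ hN0, pre_Icc _ _ _ _ hN0, h0] at h
      have h1 : ENNReal.ofReal p * μ (Set.Icc (N*a - (N - 2)) (N*c - (N - 2))) = 0 :=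
        (add_eq_zero.1 h.symm).1
      have h2 : μ (Set.Icc (N*a - (N - 2)) (N*c - (N - 2))) = 0 := by
        rcases mul_eq_zero.1 h1 with h' | h'
        · exact absurd h' hpne0
        · exact h'
      rw [show N*a - (N - 2) = a by linarith [haN]] at h2
      have hcc1 : (N*c - (N - 2)) - a = N * (c - a) := by linarith [haN]
      have hac1 : a < N*c - (N - 2) := by nlinarith [mul_pos hN0 (sub_pos.2 hac)]
      rcases le_or_gt (N*c - (N - 2)) 1 with hle | hgt
      · have hih := ih (N*c - (N - 2)) hac1 hle h2
        have hpow : (2:ℝ) ^ (m * (n + 1)) = 2 ^ (m * n) * N := by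
          rw [hNdef, Nat.mul_succ, pow_add]
        rw [hcc1] at hih
        calc a + 2 ^ (m * (n + 1)) * (c - a) = a + 2 ^ (m * n) * (N * (c - a)) := by
              rw [hpow]; ring
        _ < 1 := hih
      · exact absurd (measure_mono_null (Set.Icc_subset_Icc_right hgt.le) h2) hIcca1
  have hpos : ∀ c : ℝ, a < c → c ≤ 1 → μ (Set.Icc a c) ≠ 0 := by
    intro c hac hc1 h0
    obtain ⟨n, hn⟩ := pow_unbounded_of_one_lt ((1 - a)/(c - a)) (one_lt_two (α := ℝ))
    have hmn : (2:ℝ) ^ n ≤ 2 ^ (m * n) :=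
      pow_le_pow_right₀ one_le_two (Nat.le_mul_of_pos_left n (by omega))
    have h1 : (1 - a)/(c - a) < 2 ^ (m * n) := lt_of_lt_of_le hn hmn
    have h2 : 1 - a < 2 ^ (m * n) * (c - a) := by
      rw [div_lt_iff₀ (by linarith)] at h1; linarith
    have := key n c hac hc1 h0
    linarith
  have hΦpos : ∀ y : ℝ, a < y → y ≤ 1 → 0 < Φ y := by
    intro y hy hy1
    rw [hΦ]
    refine ENNReal.toReal_pos (fun h0 => ?_) (hfin _)
    exact hpos y hy hy1 (measure_mono_null (Set.Icc_subset_Icc_left ha0.le) h0)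
  -- main
  intro x hx
  obtain ⟨hx0, hx1⟩ := hx
  constructor
  · -- φ x = 0 → x ≤ t
    intro hφ0
    by_contra hxt
    push_neg at hxt
    have hxt' : N - M - 1 < x * (N - 1) := by
      rw [div_lt_iff₀ (by linarith)] at hxt; linarith
    have hba : (M - 1)/M ≤ a := by
      rw [hadef, div_le_div_iff₀ hM0 (by linarith)]
      nlinarith [hNM, hM1]
    have hay : a < (x + (M - 1))/M := by
      rw [hadef, div_lt_div_iff₀ (by linarith) hM0]
      nlinarith [hNM, hxt', hM1]
    have hy1 : (x + (M - 1))/M ≤ 1 := by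
      rw [div_le_one hM0]; linarith
    have hterm : 0 < Φ ((x + ((2 ^ (m - 1) - 1 : ℕ) : ℝ)) / (2:ℝ) ^ (m - 1)) -
        Φ (((2 ^ (m - 1) - 1 : ℕ) : ℝ) / (2:ℝ) ^ (m - 1)) := by
      rw [hcastM]
      rw [hΦ0 _ hba, sub_zero]
      exact hΦpos _ hay hy1
    have hnn : ∀ i : ℕ, ∀ k : ℕ, 0 ≤ Φ ((x + (k:ℝ)) / 2 ^ i) - Φ ((k:ℝ) / 2 ^ i) := by
      intro i k
      have h := hΦmono ((k:ℝ)/2^i) ((x + (k:ℝ))/2^i)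
        ((div_le_div_iff_of_pos_right (by positivity)).2 (by linarith))
      linarith
    have hS : 0 < ∑ i ∈ Finset.range m, ∑ k ∈ Finset.range (2 ^ i),
        (Φ ((x + (k:ℝ)) / 2 ^ i) - Φ ((k:ℝ) / 2 ^ i)) := by
      apply Finset.sum_pos'
      · intro i _
        exact Finset.sum_nonneg fun k _ => hnn i k
      · refine ⟨m - 1, Finset.mem_range.2 (by omega), ?_⟩
        apply Finset.sum_pos'
        · intro k _
          exact hnn (m - 1) k
        · exact ⟨2 ^ (m - 1) - 1, Finset.mem_range.2 (by omega), hterm⟩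
    rw [hφ] at hφ0
    have hm0 : (0:ℝ) < (m:ℝ) := by exact_mod_cast (by omega : 0 < m)
    have : (0:ℝ) < (1/m : ℝ) * ∑ i ∈ Finset.range m, ∑ k ∈ Finset.range (2 ^ i),
        (Φ ((x + (k:ℝ)) / 2 ^ i) - Φ ((k:ℝ) / 2 ^ i)) :=
      mul_pos (by positivity) hS
    linarith [this, hφ0.ge, hφ0.le]
  · -- x ≤ t → φ x = 0
    intro hxt
    have hx' : x * (N - 1) ≤ N - M - 1 := by
      rw [← div_mul_cancel₀ (N - M - 1) (show N - 1 ≠ 0 by linarith)]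
      exact mul_le_mul_of_nonneg_right hxt (by linarith)
    rw [hφ]
    rw [Finset.sum_eq_zero, mul_zero]
    intro i hi
    apply Finset.sum_eq_zero
    intro k hk
    have hilt : i < m := Finset.mem_range.1 hi
    have hi' : (2:ℝ) ^ i ≤ M := by
      rw [hMdef]
      exact pow_le_pow_right₀ one_le_two (by omega : i ≤ m - 1)
    have hk' : (k:ℝ) ≤ 2 ^ i - 1 := by
      have hkn : (k:ℕ) + 1 ≤ 2 ^ i := Finset.mem_range.1 hk
      have := (Nat.cast_le (α := ℝ)).2 hkn
      push_cast at this
      linarith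
    have hpi : (0:ℝ) < 2 ^ i := by positivity
    have harg : (x + (k:ℝ)) / 2 ^ i ≤ a := by
      rw [hadef, div_le_div_iff₀ hpi (by linarith)]
      have hk2 : (k:ℝ) * (N - 1) ≤ (2 ^ i - 1) * (N - 1) :=
        mul_le_mul_of_nonneg_right hk' (by linarith)
      linarith [hx', hk2, hi']
    have harg2 : (k:ℝ) / 2 ^ i ≤ a :=
      le_trans ((div_le_div_iff_of_pos_right hpi).2 (by linarith)) harg
    rw [hΦ0 _ harg, hΦ0 _ harg2, sub_self]
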